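/- Let B_i = R ⊗_{R^i} R where R = k[x_1,…,x_{n+1}] and R^i is the subring of s_i-invariants. The set of elements v ∈ B_i such that ξ·v = v·ξ for all ξ ∈ R (i.e., the R-bimodule maps R → B_i) is a free left R-module of rank 1 generated by v₀ = 1 ⊗ x_i − x_{i+1} ⊗ 1. -/

import Mathlib

open MvPolynomial TensorProduct

set_option maxHeartbeats 2000000
set_option synthInstance.maxHeartbeats 1000000

/-- The subalgebra `R^i` of polynomials invariant under the transposition `s_i = (i,i+1)`. -/
noncomputable def Rinv (n : ℕ) (k : Type*) [CommRing k] (i : Fin n) :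
    Subalgebra k (MvPolynomial (Fin (n + 1)) k) :=
  AlgHom.equalizer (rename (Equiv.swap i.castSucc i.succ))
    (AlgHom.id k (MvPolynomial (Fin (n + 1)) k))

/-- The Soergel bimodule `B_i = R ⊗_{R^i} R` (ungraded). -/
abbrev SoergelB (n : ℕ) (k : Type*) [CommRing k] (i : Fin n) :=
  TensorProduct (Rinv n k i) (MvPolynomial (Fin (n + 1)) k) (MvPolynomial (Fin (n + 1)) k)

/-- The element `v₀ = 1 ⊗ x_i − x_{i+1} ⊗ 1` of `B_i`. -/
noncomputable def v0 (n : ℕ) (k : Type*) [CommRing k] (i : Fin n) : SoergelB n k i :=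
  (1 : MvPolynomial (Fin (n + 1)) k) ⊗ₜ[Rinv n k i] (X i.castSucc) -
    (X i.succ) ⊗ₜ[Rinv n k i] (1 : MvPolynomial (Fin (n + 1)) k)

namespace SoergelAux

variable {n : ℕ} {k : Type*} [CommRing k] (i : Fin n)

lemma mem_Rinv_iff (f : MvPolynomial (Fin (n+1)) k) :
    f ∈ Rinv n k i ↔ rename (Equiv.swap i.castSucc i.succ) f = f := Iff.rfl

lemma e_mem : (X i.castSucc + X i.succ : MvPolynomial (Fin (n+1)) k) ∈ Rinv n k i := by
  simp [Rinv, AlgHom.mem_equalizer, add_comm]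

lemma p_mem : (X i.castSucc * X i.succ : MvPolynomial (Fin (n+1)) k) ∈ Rinv n k i := by
  simp [Rinv, AlgHom.mem_equalizer, mul_comm]

lemma X_mem (j : Fin (n+1)) (h1 : j ≠ i.castSucc) (h2 : j ≠ i.succ) :
    (X j : MvPolynomial (Fin (n+1)) k) ∈ Rinv n k i := by
  simp [Rinv, AlgHom.mem_equalizer, Equiv.swap_apply_of_ne_of_ne h1 h2]

lemma tmul_invariant (c g h : MvPolynomial (Fin (n+1)) k) (hc : c ∈ Rinv n k i) :
    (c * g) ⊗ₜ[Rinv n k i] h = g ⊗ₜ[Rinv n k i] (c * h) := by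
  have h1 : (⟨c, hc⟩ : Rinv n k i) • g = c * g := rfl
  have h2 : (⟨c, hc⟩ : Rinv n k i) • h = c * h := rfl
  rw [← h1, ← h2]; exact TensorProduct.smul_tmul _ _ _

/-- Every polynomial decomposes as `a + b * x_i` with `a, b` invariant. -/
lemma decomp (f : MvPolynomial (Fin (n+1)) k) :
    ∃ a b : MvPolynomial (Fin (n+1)) k,
      a ∈ Rinv n k i ∧ b ∈ Rinv n k i ∧ f = a + b * X i.castSucc := by
  induction f using MvPolynomial.induction_on with
  | C c =>
      refine ⟨C c, 0, ?_, zero_mem _, by ring⟩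
      simp [Rinv, AlgHom.mem_equalizer]
  | add f g hf hg =>
      obtain ⟨a, b, ha, hb, rfl⟩ := hf
      obtain ⟨a', b', ha', hb', rfl⟩ := hg
      exact ⟨a + a', b + b', add_mem ha ha', add_mem hb hb', by ring⟩
  | mul_X f j hf =>
      obtain ⟨a, b, ha, hb, rfl⟩ := hf
      by_cases hj1 : j = i.castSucc
      · subst hj1
        refine ⟨-((X i.castSucc * X i.succ) * b), a + (X i.castSucc + X i.succ) * b,
          neg_mem (mul_mem (p_mem i) hb), add_mem ha (mul_mem (e_mem i) hb), by ring⟩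
      · by_cases hj2 : j = i.succ
        · subst hj2
          refine ⟨a * (X i.castSucc + X i.succ) + b * (X i.castSucc * X i.succ), -a,
            add_mem (mul_mem ha (e_mem i)) (mul_mem hb (p_mem i)), neg_mem ha, by ring⟩
        · exact ⟨a * X j, b * X j, mul_mem ha (X_mem i j hj1 hj2),
            mul_mem hb (X_mem i j hj1 hj2), by ring⟩

/-- The swap, as an `R^i`-algebra endomorphism of `R`. -/
noncomputable def sigmaHom : MvPolynomial (Fin (n+1)) k →ₐ[Rinv n k i] MvPolynomial (Fin (n+1)) k where
  toRingHom := (rename (Equiv.swap i.castSucc i.succ) :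
    MvPolynomial (Fin (n+1)) k →ₐ[k] MvPolynomial (Fin (n+1)) k).toRingHom
  commutes' := fun r => r.2

/-- Multiplication map `B_i → R`. -/
noncomputable def phi1 : SoergelB n k i →ₐ[Rinv n k i] MvPolynomial (Fin (n+1)) k :=
  Algebra.TensorProduct.lift (AlgHom.id _ _) (AlgHom.id _ _) (fun x y => Commute.all _ _)

/-- Twisted multiplication map `B_i → R`, `a ⊗ b ↦ a · s(b)`. -/
noncomputable def phi2 : SoergelB n k i →ₐ[Rinv n k i] MvPolynomial (Fin (n+1)) k :=
  Algebra.TensorProduct.lift (AlgHom.id _ _) (sigmaHom i) (fun x y => Commute.all _ _)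

@[simp] lemma phi1_tmul (x y : MvPolynomial (Fin (n+1)) k) :
    phi1 i (x ⊗ₜ[Rinv n k i] y) = x * y := by
  exact Algebra.TensorProduct.lift_tmul _ _ _ x y

@[simp] lemma phi2_tmul (x y : MvPolynomial (Fin (n+1)) k) :
    phi2 i (x ⊗ₜ[Rinv n k i] y) = x * rename (Equiv.swap i.castSucc i.succ) y := by
  exact Algebra.TensorProduct.lift_tmul _ _ _ x y

/-- `x_i - x_{i+1}` is a regular element. -/
lemma reg (f : MvPolynomial (Fin (n+1)) k)
    (h : (X i.castSucc - X i.succ) * f = 0) : f = 0 := by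
  have hne : i.castSucc ≠ i.succ := (Fin.castSucc_lt_succ (i := i)).ne
  set ψ : MvPolynomial (Fin (n+1)) k →ₐ[k] MvPolynomial (Fin (n+1)) k :=
    aeval (fun j => if j = i.castSucc then X i.castSucc + X i.succ else X j) with hψ
  set ψ' : MvPolynomial (Fin (n+1)) k →ₐ[k] MvPolynomial (Fin (n+1)) k :=
    aeval (fun j => if j = i.castSucc then X i.castSucc - X i.succ else X j) with hψ'
  have hcomp : ψ'.comp ψ = AlgHom.id k _ := by
    apply MvPolynomial.algHom_ext
    intro j
    by_cases hj : j = i.castSucc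
    · subst hj
      simp [hψ, hψ', aeval_X, if_neg hne.symm]
    · simp [hψ, hψ', aeval_X, if_neg hj]
  have hXreg : ∀ g : MvPolynomial (Fin (n+1)) k, X i.castSucc * g = 0 → g = 0 := by
    intro g hg
    ext m
    have := congrArg (fun q => MvPolynomial.coeff (Finsupp.single i.castSucc 1 + m) q) hg
    simpa [MvPolynomial.coeff_X_mul] using this
  have h2 : X i.castSucc * ψ f = 0 := by
    have := congrArg ψ h
    rw [map_mul, map_zero] at this
    rw [← this]
    congr 1
    simp [hψ, aeval_X, if_neg hne.symm]
  have h3 : ψ f = 0 := hXreg _ h2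
  have := congrArg ψ' h3
  rw [map_zero] at this
  have h4 : (ψ'.comp ψ) f = 0 := this
  rw [hcomp] at h4
  simpa using h4

/-- The key computation: `(x_i ⊗ 1 − 1 ⊗ x_i) · v₀ = 0`. -/
lemma key : (((X i.castSucc : MvPolynomial (Fin (n+1)) k) ⊗ₜ[Rinv n k i]
      (1 : MvPolynomial (Fin (n+1)) k)) -
    ((1 : MvPolynomial (Fin (n+1)) k) ⊗ₜ[Rinv n k i]
      (X i.castSucc : MvPolynomial (Fin (n+1)) k))) * v0 n k i = 0 := by
  rw [v0]
  have t1 : ((X i.castSucc : MvPolynomial (Fin (n+1)) k) ⊗ₜ[Rinv n k i]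
        (1 : MvPolynomial (Fin (n+1)) k))
      * ((1 : MvPolynomial (Fin (n+1)) k) ⊗ₜ[Rinv n k i]
        (X i.castSucc : MvPolynomial (Fin (n+1)) k))
      = (X i.castSucc : MvPolynomial (Fin (n+1)) k) ⊗ₜ[Rinv n k i]
        (X i.castSucc : MvPolynomial (Fin (n+1)) k) := by
    rw [Algebra.TensorProduct.tmul_mul_tmul, mul_one, one_mul]
  have t2 : ((X i.castSucc : MvPolynomial (Fin (n+1)) k) ⊗ₜ[Rinv n k i]
        (1 : MvPolynomial (Fin (n+1)) k))
      * ((X i.succ : MvPolynomial (Fin (n+1)) k) ⊗ₜ[Rinv n k i]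
        (1 : MvPolynomial (Fin (n+1)) k))
      = ((X i.castSucc * X i.succ : MvPolynomial (Fin (n+1)) k)) ⊗ₜ[Rinv n k i]
        (1 : MvPolynomial (Fin (n+1)) k) := by
    rw [Algebra.TensorProduct.tmul_mul_tmul, mul_one]
  have t3 : (((1 : MvPolynomial (Fin (n+1)) k)) ⊗ₜ[Rinv n k i]
        (X i.castSucc : MvPolynomial (Fin (n+1)) k))
      * ((1 : MvPolynomial (Fin (n+1)) k) ⊗ₜ[Rinv n k i]
        (X i.castSucc : MvPolynomial (Fin (n+1)) k))
      = (1 : MvPolynomial (Fin (n+1)) k) ⊗ₜ[Rinv n k i]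
        ((X i.castSucc * X i.castSucc : MvPolynomial (Fin (n+1)) k)) := by
    rw [Algebra.TensorProduct.tmul_mul_tmul, mul_one]
  have t4 : (((1 : MvPolynomial (Fin (n+1)) k)) ⊗ₜ[Rinv n k i]
        (X i.castSucc : MvPolynomial (Fin (n+1)) k))
      * ((X i.succ : MvPolynomial (Fin (n+1)) k) ⊗ₜ[Rinv n k i]
        (1 : MvPolynomial (Fin (n+1)) k))
      = (X i.succ : MvPolynomial (Fin (n+1)) k) ⊗ₜ[Rinv n k i]
        (X i.castSucc : MvPolynomial (Fin (n+1)) k) := by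
    rw [Algebra.TensorProduct.tmul_mul_tmul, one_mul, mul_one]
  have h1 : ((X i.castSucc * X i.succ : MvPolynomial (Fin (n+1)) k)) ⊗ₜ[Rinv n k i]
        (1 : MvPolynomial (Fin (n+1)) k)
      = (1 : MvPolynomial (Fin (n+1)) k) ⊗ₜ[Rinv n k i]
        ((X i.castSucc * X i.succ : MvPolynomial (Fin (n+1)) k)) := by
    have := tmul_invariant (k := k) i (X i.castSucc * X i.succ) 1 1 (p_mem i)
    simpa using this
  have h3 : (X i.castSucc : MvPolynomial (Fin (n+1)) k) ⊗ₜ[Rinv n k i]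
        (X i.castSucc : MvPolynomial (Fin (n+1)) k)
      + (X i.succ : MvPolynomial (Fin (n+1)) k) ⊗ₜ[Rinv n k i]
        (X i.castSucc : MvPolynomial (Fin (n+1)) k)
      = (1 : MvPolynomial (Fin (n+1)) k) ⊗ₜ[Rinv n k i]
        (((X i.castSucc + X i.succ) * X i.castSucc : MvPolynomial (Fin (n+1)) k)) := by
    rw [← TensorProduct.add_tmul]
    have := tmul_invariant (k := k) i (X i.castSucc + X i.succ) 1 (X i.castSucc) (e_mem i)
    simpa using this
  have hz : (1 : MvPolynomial (Fin (n+1)) k) ⊗ₜ[Rinv n k i]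
        (((X i.castSucc + X i.succ) * X i.castSucc : MvPolynomial (Fin (n+1)) k))
      = (1 : MvPolynomial (Fin (n+1)) k) ⊗ₜ[Rinv n k i]
          ((X i.castSucc * X i.succ : MvPolynomial (Fin (n+1)) k))
        + (1 : MvPolynomial (Fin (n+1)) k) ⊗ₜ[Rinv n k i]
          ((X i.castSucc * X i.castSucc : MvPolynomial (Fin (n+1)) k)) := by
    rw [← TensorProduct.tmul_add]
    congr 1
    ring
  linear_combination t1 - t2 - t3 + t4 - h1 + h3 + hz

/-- Every element of `B_i` is of the form `a ⊗ 1 + b ⊗ x_i`. -/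
lemma rep (v : SoergelB n k i) :
    ∃ a b : MvPolynomial (Fin (n+1)) k,
      v = a ⊗ₜ[Rinv n k i] 1 + b ⊗ₜ[Rinv n k i] X i.castSucc := by
  induction v using TensorProduct.induction_on with
  | zero => exact ⟨0, 0, by simp⟩
  | tmul g f =>
      obtain ⟨a, b, ha, hb, rfl⟩ := decomp i f
      refine ⟨a * g, b * g, ?_⟩
      rw [TensorProduct.tmul_add, tmul_invariant i a g 1 ha,
        tmul_invariant i b g (X i.castSucc) hb, mul_one]
  | add x y hx hy =>
      obtain ⟨a, b, rfl⟩ := hx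
      obtain ⟨a', b', rfl⟩ := hy
      exact ⟨a + a', b + b', by rw [TensorProduct.add_tmul, TensorProduct.add_tmul]; ring⟩

end SoergelAux

theorem soergel_central_elements (n : ℕ) (k : Type*) [CommRing k] (i : Fin n) :
    (∀ v : SoergelB n k i,
      (∀ ξ : MvPolynomial (Fin (n + 1)) k,
        (ξ ⊗ₜ[Rinv n k i] (1 : MvPolynomial (Fin (n + 1)) k)) * v =
          ((1 : MvPolynomial (Fin (n + 1)) k) ⊗ₜ[Rinv n k i] ξ) * v) ↔
      (∃ f : MvPolynomial (Fin (n + 1)) k,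
        v = (f ⊗ₜ[Rinv n k i] (1 : MvPolynomial (Fin (n + 1)) k)) * v0 n k i)) ∧
    (∀ f : MvPolynomial (Fin (n + 1)) k,
      (f ⊗ₜ[Rinv n k i] (1 : MvPolynomial (Fin (n + 1)) k)) * v0 n k i = 0 → f = 0) := by
  constructor
  · intro v
    constructor
    · -- hard direction
      intro hv
      obtain ⟨a, b, rfl⟩ := SoergelAux.rep i v
      have h := hv (X i.castSucc)
      have h2 := congrArg (SoergelAux.phi2 i) h
      simp only [map_mul, map_add, SoergelAux.phi2_tmul, map_one, mul_one, one_mul,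
        rename_X, Equiv.swap_apply_left] at h2
      -- h2 : X i.castSucc * (a + b * X i.succ) = X i.succ * (a + b * X i.succ)
      have hab : a + b * X i.succ = 0 := by
        refine SoergelAux.reg i _ ?_
        linear_combination h2
      have ha' : a = -(b * X i.succ) := by linear_combination hab
      subst ha'
      refine ⟨b, ?_⟩
      rw [v0]
      have t1 : (b ⊗ₜ[Rinv n k i] (1 : MvPolynomial (Fin (n + 1)) k))
          * ((1 : MvPolynomial (Fin (n + 1)) k) ⊗ₜ[Rinv n k i] X i.castSucc)
          = b ⊗ₜ[Rinv n k i] (X i.castSucc : MvPolynomial (Fin (n + 1)) k) := by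
        rw [Algebra.TensorProduct.tmul_mul_tmul, mul_one, one_mul]
      have t2 : (b ⊗ₜ[Rinv n k i] (1 : MvPolynomial (Fin (n + 1)) k))
          * ((X i.succ : MvPolynomial (Fin (n + 1)) k) ⊗ₜ[Rinv n k i] 1)
          = (b * X i.succ) ⊗ₜ[Rinv n k i] (1 : MvPolynomial (Fin (n + 1)) k) := by
        rw [Algebra.TensorProduct.tmul_mul_tmul, mul_one]
      have t3 : (-(b * X i.succ) : MvPolynomial (Fin (n + 1)) k) ⊗ₜ[Rinv n k i]
            (1 : MvPolynomial (Fin (n + 1)) k)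
          = - ((b * X i.succ) ⊗ₜ[Rinv n k i] (1 : MvPolynomial (Fin (n + 1)) k)) :=
        TensorProduct.neg_tmul _ _
      linear_combination -t1 + t2 + t3
    · -- easy direction
      rintro ⟨f, rfl⟩ ξ
      obtain ⟨a, b, ha, hb, rfl⟩ := SoergelAux.decomp i ξ
      have e1 : ((a + b * X i.castSucc) : MvPolynomial (Fin (n + 1)) k) ⊗ₜ[Rinv n k i]
            (1 : MvPolynomial (Fin (n + 1)) k)
          = a ⊗ₜ[Rinv n k i] (1 : MvPolynomial (Fin (n + 1)) k)
            + (b * X i.castSucc) ⊗ₜ[Rinv n k i] (1 : MvPolynomial (Fin (n + 1)) k) :=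
        TensorProduct.add_tmul _ _ _
      have e2 : (1 : MvPolynomial (Fin (n + 1)) k) ⊗ₜ[Rinv n k i]
            ((a + b * X i.castSucc) : MvPolynomial (Fin (n + 1)) k)
          = (1 : MvPolynomial (Fin (n + 1)) k) ⊗ₜ[Rinv n k i] a
            + (1 : MvPolynomial (Fin (n + 1)) k) ⊗ₜ[Rinv n k i] (b * X i.castSucc) :=
        TensorProduct.tmul_add _ _ _
      have e3 : a ⊗ₜ[Rinv n k i] (1 : MvPolynomial (Fin (n + 1)) k)
          = (1 : MvPolynomial (Fin (n + 1)) k) ⊗ₜ[Rinv n k i] a := by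
        have := SoergelAux.tmul_invariant (k := k) i a 1 1 ha
        simpa using this
      have e4 : ((b * X i.castSucc) : MvPolynomial (Fin (n + 1)) k) ⊗ₜ[Rinv n k i]
            (1 : MvPolynomial (Fin (n + 1)) k)
          = (b ⊗ₜ[Rinv n k i] (1 : MvPolynomial (Fin (n + 1)) k))
            * ((X i.castSucc : MvPolynomial (Fin (n + 1)) k) ⊗ₜ[Rinv n k i] 1) := by
        rw [Algebra.TensorProduct.tmul_mul_tmul, mul_one]
      have e5 : (1 : MvPolynomial (Fin (n + 1)) k) ⊗ₜ[Rinv n k i]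
            ((b * X i.castSucc) : MvPolynomial (Fin (n + 1)) k)
          = (b ⊗ₜ[Rinv n k i] (1 : MvPolynomial (Fin (n + 1)) k))
            * ((1 : MvPolynomial (Fin (n + 1)) k) ⊗ₜ[Rinv n k i] X i.castSucc) := by
        rw [Algebra.TensorProduct.tmul_mul_tmul, one_mul, mul_one]
        have := SoergelAux.tmul_invariant (k := k) i b 1 (X i.castSucc) hb
        simpa using this.symm
      have hkey := SoergelAux.key (k := k) i
      linear_combination (v0 n k i * ((f : MvPolynomial (Fin (n + 1)) k) ⊗ₜ[Rinv n k i]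
          (1 : MvPolynomial (Fin (n + 1)) k))) * (e1 - e2 + e3 + e4 - e5)
        + ((b ⊗ₜ[Rinv n k i] (1 : MvPolynomial (Fin (n + 1)) k))
          * (f ⊗ₜ[Rinv n k i] (1 : MvPolynomial (Fin (n + 1)) k))) * hkey
  · -- freeness
    intro f hf
    have h := congrArg (SoergelAux.phi1 i) hf
    rw [v0] at h
    simp only [map_mul, map_sub, map_zero, SoergelAux.phi1_tmul, mul_one, one_mul] at h
    refine SoergelAux.reg i f ?_
    linear_combination h
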